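/- Let P and Q be fields, R a subring of Q, and h : R → P a ring homomorphism. Let C : 0 → C_p → C_{p−1} → ⋯ → C_0 → 0 be a chain complex of finitely generated free R-modules. Then for any integers n ≥ 0 and r, Σ_{s=r}^{2n+r} (−1)^{s−r} dim_Q H_s(C ⊗_R Q) ≤ Σ_{s=r}^{2n+r} (−1)^{s−r} dim_P H_s(C ⊗_h P). -/

import Mathlib

open Matrix
set_option synthInstance.maxHeartbeats 1000000
set_option maxHeartbeats 1000000
set_option linter.unusedSectionVars false

section aux
variable {K : Type*} [Field K] {m n l o : Type*} [Fintype m] [Fintype n] [Fintype l] [Fintype o]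

lemma aux_rank_submatrix_le [DecidableEq m] [DecidableEq n]
    (M : Matrix m n K) (f : l → m) (g : o → n) :
    (M.submatrix f g).rank ≤ M.rank := by
  have h1 : M.submatrix f g =
      ((1 : Matrix m m K).submatrix f _root_.id) * M * ((1 : Matrix n n K).submatrix _root_.id g) := by
    ext i j
    simp [Matrix.mul_apply, Matrix.one_apply, Finset.sum_ite_eq, Finset.sum_ite_eq']
  rw [h1]
  exact le_trans (Matrix.rank_mul_le_left _ _) (Matrix.rank_mul_le_right _ _)

lemma aux_exists_cols (M : Matrix m n K) :
    ∃ g : Fin M.rank → n, LinearIndependent K (fun i => Mᵀ (g i)) := by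
  classical
  obtain ⟨b, hbsub, hbspan, hbli⟩ := exists_linearIndependent K (Set.range Mᵀ)
  have hbfin : b.Finite := (Set.finite_range Mᵀ).subset hbsub
  haveI := hbfin.fintype
  have hcard : Fintype.card b = M.rank := by
    rw [Matrix.rank_eq_finrank_span_cols, Matrix.col, ← hbspan, finrank_span_set_eq_card hbli,
      Set.toFinset_card]
  let e : Fin M.rank ≃ b := (Fintype.equivFinOfCardEq hcard).symm
  choose g hg using fun x : b => hbsub x.2
  refine ⟨fun i => g (e i), ?_⟩
  have heq : (fun i => Mᵀ (g (e i))) = (fun x : b => (x : m → K)) ∘ e := by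
    funext i; exact hg (e i)
  rw [heq]
  exact hbli.comp e e.injective

lemma aux_exists_det [DecidableEq m] (M : Matrix m n K) :
    ∃ (f : Fin M.rank → m) (g : Fin M.rank → n), (M.submatrix f g).det ≠ 0 := by
  classical
  obtain ⟨g, hg⟩ := aux_exists_cols M
  set N := M.submatrix _root_.id g with hN
  have hrankN : Nᵀ.rank = M.rank := by
    have hli : LinearIndependent K (fun i => Nᵀ i) := by
      convert hg using 1
      rfl
    have := hli.rank_matrix
    rw [Fintype.card_fin] at this
    exact this
  obtain ⟨f0, hf0⟩ := aux_exists_cols Nᵀ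
  let f : Fin M.rank → m := fun i => f0 (Fin.cast hrankN.symm i)
  have hli2 : LinearIndependent K (fun i : Fin M.rank => N (f i)) := by
    have : LinearIndependent K (fun i => Nᵀᵀ (f0 i)) := hf0
    rw [transpose_transpose] at this
    exact this.comp (fun i => Fin.cast hrankN.symm i)
      (fun a b hab => by simpa [Fin.ext_iff] using hab)
  refine ⟨f, g, ?_⟩
  have hU : IsUnit (M.submatrix f g) := by
    rw [← Matrix.linearIndependent_rows_iff_isUnit]
    exact hli2
  exact ((Matrix.isUnit_iff_isUnit_det _).mp hU).ne_zero

lemma aux_rank_map_le {R' P Q : Type*} [CommRing R'] [Field P] [Field Q]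
    [DecidableEq m] [DecidableEq n]
    (M : Matrix m n R') (h : R' →+* P) (ι : R' →+* Q) (hι : Function.Injective ι) :
    (M.map h).rank ≤ (M.map ι).rank := by
  obtain ⟨f, g, hdet⟩ := aux_exists_det (M.map h)
  have e1 : (M.map ⇑h).submatrix f g = (M.submatrix f g).map h := Matrix.submatrix_map _ _ _ _
  have edh : ((M.submatrix f g).map ⇑h).det = h (M.submatrix f g).det := by
    rw [← RingHom.mapMatrix_apply, ← RingHom.map_det]
  have edi : ((M.submatrix f g).map ⇑ι).det = ι (M.submatrix f g).det := by
    rw [← RingHom.mapMatrix_apply, ← RingHom.map_det]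
  rw [e1, edh] at hdet
  have hd : (M.submatrix f g).det ≠ 0 := fun e => hdet (by rw [e, map_zero])
  have key : ((M.map ι).submatrix f g).det ≠ 0 := by
    rw [show (M.map ⇑ι).submatrix f g = (M.submatrix f g).map ι from Matrix.submatrix_map _ _ _ _,
      edi]
    intro e
    exact hd (hι (by rw [e, map_zero]))
  calc (M.map ⇑h).rank = ((M.map ⇑ι).submatrix f g).rank := by
        rw [Matrix.rank_of_isUnit _ ((Matrix.isUnit_iff_isUnit_det _).mpr
          (isUnit_iff_ne_zero.mpr key)), Fintype.card_fin]
    _ ≤ (M.map ⇑ι).rank := aux_rank_submatrix_le _ _ _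

lemma aux_hom_dim {a b c' : Type*} [Fintype a] [Fintype b] [Fintype c']
    (B : Matrix a b K) (C : Matrix b c' K) (hBC : B * C = 0) :
    Module.finrank K
      (LinearMap.ker B.mulVecLin ⧸
        (LinearMap.range C.mulVecLin).comap (LinearMap.ker B.mulVecLin).subtype)
      + C.rank + B.rank = Fintype.card b := by
  have hle : LinearMap.range C.mulVecLin ≤ LinearMap.ker B.mulVecLin := by
    rintro x ⟨y, rfl⟩
    simp only [LinearMap.mem_ker, Matrix.mulVecLin_apply, Matrix.mulVec_mulVec, hBC,
      Matrix.zero_mulVec]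
  have e1 := Submodule.finrank_quotient_add_finrank
    ((LinearMap.range C.mulVecLin).comap (LinearMap.ker B.mulVecLin).subtype)
  have e2 : Module.finrank K
      ((LinearMap.range C.mulVecLin).comap (LinearMap.ker B.mulVecLin).subtype) = C.rank :=
    (Submodule.comapSubtypeEquivOfLe hle).finrank_eq
  have e3 := LinearMap.finrank_range_add_finrank_ker B.mulVecLin
  have e4 : Module.finrank K (b → K) = Fintype.card b := Module.finrank_fintype_fun_eq_card K
  have e5 : B.rank = Module.finrank K (LinearMap.range B.mulVecLin) := rfl
  have e6 : C.rank = Module.finrank K (LinearMap.range C.mulVecLin) := rfl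
  omega

end aux


/-- Morse-type inequality for base changes of a bounded complex of finitely
generated free `R`-modules, where `R` is a subring of a field `Q` and
`h : R → P` a ring homomorphism to a field `P`.  The complex is presented by
matrices `A k` (the differential `C_k → C_{k-1}`) over `R`; `hQ s` and `hP s`
are the dimensions of the homology `H_s` of the complexes `C ⊗_R Q` and
`C ⊗_h P` obtained by applying the coefficient change to the matrices.  Then
`Σ_{s=r}^{2n+r} (-1)^{s-r} dim_Q H_s(C ⊗_R Q)
   ≤ Σ_{s=r}^{2n+r} (-1)^{s-r} dim_P H_s(C ⊗_h P)`. -/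
theorem morse_inequality_base_change
    (Q P : Type*) [Field Q] [Field P] (R : Subring Q) (h : R →+* P)
    (p : ℕ) (c : ℤ → ℕ)
    (hbounded : ∀ k : ℤ, (k < 0 ∨ (p : ℤ) < k) → c k = 0)
    (A : ∀ k : ℤ, Matrix (Fin (c (k - 1))) (Fin (c k)) R)
    (hcomp : ∀ k : ℤ, A (k - 1) * A k = 0)
    (hQ hP : ℤ → ℕ)
    (hhQ : ∀ k : ℤ, hQ (k - 1) =
      Module.finrank Q
        (LinearMap.ker (Matrix.mulVecLin ((A (k - 1)).map (fun x => (x : Q)))) ⧸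
          (LinearMap.range (Matrix.mulVecLin ((A k).map (fun x => (x : Q))))).comap
            (LinearMap.ker
              (Matrix.mulVecLin ((A (k - 1)).map (fun x => (x : Q))))).subtype))
    (hhP : ∀ k : ℤ, hP (k - 1) =
      Module.finrank P
        (LinearMap.ker (Matrix.mulVecLin ((A (k - 1)).map (fun x => h x))) ⧸
          (LinearMap.range (Matrix.mulVecLin ((A k).map (fun x => h x)))).comap
            (LinearMap.ker
              (Matrix.mulVecLin ((A (k - 1)).map (fun x => h x)))).subtype))
    (r : ℤ) (n : ℕ) :
    ∑ s ∈ Finset.range (2 * n + 1), (-1 : ℤ) ^ s * (hQ (r + s) : ℤ) ≤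
      ∑ s ∈ Finset.range (2 * n + 1), (-1 : ℤ) ^ s * (hP (r + s) : ℤ) := by
  classical
  set qq : ℤ → ℕ := fun j => ((A j).map (fun x : R => (x : Q))).rank with hqqdef
  set pp : ℤ → ℕ := fun j => ((A j).map (fun x : R => h x)).rank with hppdef
  -- dimension formulas
  have hQeq' : ∀ k : ℤ, (hQ (k - 1) : ℤ) =
      (c (k - 1) : ℤ) - (qq (k - 1) : ℤ) - (qq k : ℤ) := by
    intro k
    have hc : ((A (k - 1)).map (fun x : R => (x : Q))) *
        ((A k).map (fun x : R => (x : Q))) = 0 := by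
      have e : (fun x : R => (x : Q)) = ⇑R.subtype := rfl
      rw [e, ← Matrix.map_mul, hcomp k]
      simp
    have h2 := aux_hom_dim ((A (k - 1)).map (fun x : R => (x : Q)))
      ((A k).map (fun x : R => (x : Q))) hc
    rw [← hhQ k, Fintype.card_fin] at h2
    simp only [hqqdef]
    push_cast [← h2]
    ring
  have hPeq' : ∀ k : ℤ, (hP (k - 1) : ℤ) =
      (c (k - 1) : ℤ) - (pp (k - 1) : ℤ) - (pp k : ℤ) := by
    intro k
    have hc : ((A (k - 1)).map (fun x : R => h x)) *
        ((A k).map (fun x : R => h x)) = 0 := by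
      have e : (fun x : R => h x) = ⇑h := rfl
      rw [e, ← Matrix.map_mul, hcomp k]
      simp
    have h2 := aux_hom_dim ((A (k - 1)).map (fun x : R => h x))
      ((A k).map (fun x : R => h x)) hc
    rw [← hhP k, Fintype.card_fin] at h2
    simp only [hppdef]
    push_cast [← h2]
    ring
  have hQeq : ∀ j : ℤ, (hQ j : ℤ) = (c j : ℤ) - (qq j : ℤ) - (qq (j + 1) : ℤ) := by
    intro j
    have := hQeq' (j + 1)
    simpa only [add_sub_cancel_right] using this
  have hPeq : ∀ j : ℤ, (hP j : ℤ) = (c j : ℤ) - (pp j : ℤ) - (pp (j + 1) : ℤ) := by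
    intro j
    have := hPeq' (j + 1)
    simpa only [add_sub_cancel_right] using this
  -- rank comparison
  have hrank : ∀ j : ℤ, pp j ≤ qq j := by
    intro j
    exact aux_rank_map_le (A j) h R.subtype Subtype.val_injective
  -- telescoping
  have key : ∀ u : ℤ → ℕ,
      ∑ s ∈ Finset.range (2 * n + 1),
        (-1 : ℤ) ^ s * ((c (r + s) : ℤ) - (u (r + s) : ℤ) - (u (r + s + 1) : ℤ)) =
      (∑ s ∈ Finset.range (2 * n + 1), (-1 : ℤ) ^ s * (c (r + s) : ℤ))
        - (u r : ℤ) - (u (r + (2 * n + 1)) : ℤ) := by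
    intro u
    have tel := Finset.sum_range_sub' (f := fun s : ℕ => (-1 : ℤ) ^ s * (u (r + s) : ℤ))
      (n := 2 * n + 1)
    have hterm : ∀ s : ℕ,
        (-1 : ℤ) ^ s * (u (r + s) : ℤ) - (-1 : ℤ) ^ (s + 1) * (u (r + (s + 1 : ℕ)) : ℤ) =
        (-1 : ℤ) ^ s * ((u (r + s) : ℤ) + (u (r + s + 1) : ℤ)) := by
      intro s
      have : r + ((s : ℤ) + 1) = r + s + 1 := by ring
      push_cast [this]
      ring
    rw [Finset.sum_congr rfl (fun s _ => hterm s)] at tel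
    have hodd : (-1 : ℤ) ^ (2 * n + 1) = -1 := Odd.neg_one_pow ⟨n, by ring⟩
    rw [Nat.cast_zero, add_zero, pow_zero, one_mul, hodd] at tel
    have expand : ∀ s : ℕ,
        (-1 : ℤ) ^ s * ((c (r + s) : ℤ) - (u (r + s) : ℤ) - (u (r + s + 1) : ℤ)) =
        (-1 : ℤ) ^ s * (c (r + s) : ℤ) -
          (-1 : ℤ) ^ s * ((u (r + s) : ℤ) + (u (r + s + 1) : ℤ)) := by
      intro s; ring
    rw [Finset.sum_congr rfl (fun s _ => expand s), Finset.sum_sub_distrib, tel]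
    push_cast
    ring
  have hQsum : ∑ s ∈ Finset.range (2 * n + 1), (-1 : ℤ) ^ s * (hQ (r + s) : ℤ) =
      (∑ s ∈ Finset.range (2 * n + 1), (-1 : ℤ) ^ s * (c (r + s) : ℤ))
        - (qq r : ℤ) - (qq (r + (2 * n + 1)) : ℤ) := by
    rw [← key qq]
    exact Finset.sum_congr rfl (fun s _ => by rw [hQeq (r + s)])
  have hPsum : ∑ s ∈ Finset.range (2 * n + 1), (-1 : ℤ) ^ s * (hP (r + s) : ℤ) =
      (∑ s ∈ Finset.range (2 * n + 1), (-1 : ℤ) ^ s * (c (r + s) : ℤ))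
        - (pp r : ℤ) - (pp (r + (2 * n + 1)) : ℤ) := by
    rw [← key pp]
    exact Finset.sum_congr rfl (fun s _ => by rw [hPeq (r + s)])
  rw [hQsum, hPsum]
  have h1 := hrank r
  have h2 := hrank (r + (2 * n + 1))
  have h1' : (pp r : ℤ) ≤ (qq r : ℤ) := by exact_mod_cast h1
  have h2' : (pp (r + (2 * n + 1)) : ℤ) ≤ (qq (r + (2 * n + 1)) : ℤ) := by exact_mod_cast h2
  linarith
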